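/- For every universal coBüchi automaton A, every k ∈ ℕ, all f_1, f_2 ∈ CF(A,k), and every ω-word w over Σ: if g_0 g_1 …, h_0 h_1 … and l_0 l_1 … denote the runs of D(A,k) on w starting from g_0 = f_1, h_0 = f_2 and l_0 = f_1 ⊔ f_2 respectively, then for all positions i ≥ 0 and all states q, l_i(q) = max(g_i(q), h_i(q)), i.e. l_i = g_i ⊔ h_i; consequently the run from f_1 ⊔ f_2 avoids unsafe states if and only if both the run from f_1 and the run from f_2 avoid unsafe states. -/
import Mathlib


open scoped Classical

/-- A preMealy machine over input alphabet `I`, output alphabet `O`, with state type `M`. -/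
structure PreMealy (I O M : Type) where
  init : M
  trans : M → I → Option (O × M)

namespace PreMealy

variable {I O M : Type}

/-- One step of a preMealy machine on a pair (input, output): defined iff the transition
on the input is defined and produces exactly the given output. -/
noncomputable def step (P : PreMealy I O M) (m : M) (p : I × O) : Option M :=
  match P.trans m p.1 with
  | some (o, m') => if o = p.2 then some m' else none
  | none => none

/-- Running a preMealy machine on a finite word of (input, output) pairs. -/
noncomputable def runFrom (P : PreMealy I O M) : M → List (I × O) → Option M
  | m, [] => some m
  | m, p :: u =>
    match P.step m p with
    | some m' => runFrom P m' u
    | none => none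

/-- The language `L(P)` of finite words in `(I·O)*` accepted by `P`. -/
def lang (P : PreMealy I O M) : Set (List (I × O)) :=
  { u | (P.runFrom P.init u).isSome }

/-- The ω-language `L_ω(P)`: ω-words all of whose finite prefixes belong to `L(P)`. -/
def omegaLang (P : PreMealy I O M) : Set (ℕ → I × O) :=
  { w | ∀ n : ℕ, ((List.range n).map w) ∈ P.lang }

/-- `P` is a (complete) Mealy machine when its transition function is total. -/
def Total (P : PreMealy I O M) : Prop :=
  ∀ m i, (P.trans m i).isSome

/-- A hole of `P` is a pair (state, input) on which the transition is undefined. -/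
def Hole (P : PreMealy I O M) (m : M) (i : I) : Prop :=
  P.trans m i = none

/-- `Left_p`: the set of finite words reaching state `p` from the initial state. -/
def leftLang (P : PreMealy I O M) (p : M) : Set (List (I × O)) :=
  { u | P.runFrom P.init u = some p }

end PreMealy

/-- `P₁ ⪯ P₂`: `P₁` is a subgraph of `P₂`. -/
def Subgraph {I O M₁ M₂ : Type} (P₁ : PreMealy I O M₁) (P₂ : PreMealy I O M₂) : Prop :=
  ∃ Φ : M₁ → M₂, Function.Injective Φ ∧ Φ P₁.init = P₂.init ∧
    ∀ p i o q, P₁.trans p i = some (o, q) ↔ P₂.trans (Φ p) i = some (o, Φ q)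

/-- `S` is `P`-realizable: some (finite-state, complete) Mealy machine extends `P`
and its ω-language is included in `S ⊆ (I·O)^ω`. -/
def PRealizable {I O M : Type} (P : PreMealy I O M) (S : Set (ℕ → I × O)) : Prop :=
  ∃ (N : Type) (_ : Fintype N) (Mach : PreMealy I O N),
    Mach.Total ∧ Subgraph P Mach ∧ Mach.omegaLang ⊆ S

/-- Quotient (left derivative) of a set of ω-words by a finite word. -/
def wordQuot {α : Type} (u : List α) (S : Set (ℕ → α)) : Set (ℕ → α) :=
  { v | (fun n => if h : n < u.length then u.get ⟨n, h⟩ else v (n - u.length)) ∈ S }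

/-- Interleaving of an ω-word over `I × O` into an ω-word over `Σ = I ⊕ O`. -/
def interleave {I O : Type} (w : ℕ → I × O) : ℕ → I ⊕ O :=
  fun n => if n % 2 = 0 then Sum.inl (w (n / 2)).1 else Sum.inr (w (n / 2)).2

/-- Flattening of a finite word over `I × O` into a word over `Σ = I ⊕ O`. -/
def flattenWord {I O : Type} (u : List (I × O)) : List (I ⊕ O) :=
  u.flatMap fun p => [Sum.inl p.1, Sum.inr p.2]

/-- `P`-realizability of a specification over `Σ = I ⊕ O`. -/
def PRealizableSigma {I O M : Type} (P : PreMealy I O M) (S : Set (ℕ → I ⊕ O)) : Prop :=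
  ∃ (N : Type) (_ : Fintype N) (Mach : PreMealy I O N),
    Mach.Total ∧ Subgraph P Mach ∧ ∀ w ∈ Mach.omegaLang, interleave w ∈ S

/-- Realizability of a specification over `Σ = I ⊕ O` by some Mealy machine. -/
def RealizableSigma (I O : Type) (S : Set (ℕ → I ⊕ O)) : Prop :=
  ∃ (N : Type) (_ : Fintype N) (Mach : PreMealy I O N),
    Mach.Total ∧ ∀ w ∈ Mach.omegaLang, interleave w ∈ S

/-- A universal coBüchi automaton; `col1 q` means state `q` has color 1. -/
structure UCB (σ Q : Type) where
  init : Set Q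
  δ : Q → σ → Set Q
  δ_ne : ∀ q a, (δ q a).Nonempty
  col1 : Q → Prop

namespace UCB

variable {σ Q : Type}

/-- `ρ` is a run of `A` on the ω-word `w`. -/
def Run (A : UCB σ Q) (w : ℕ → σ) (ρ : ℕ → Q) : Prop :=
  ρ 0 ∈ A.init ∧ ∀ n, ρ (n + 1) ∈ A.δ (ρ n) (w n)

/-- `L^∀_k(A)`: every run visits 1-colored states at most `k` times. -/
def langK (A : UCB σ Q) (k : ℕ) : Set (ℕ → σ) :=
  { w | ∀ ρ : ℕ → Q, A.Run w ρ →
      ∀ s : Finset ℕ, (∀ j ∈ s, A.col1 (ρ j)) → s.card ≤ k }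

/-- `L^∀(A)`: every run visits 1-colored states only finitely often. -/
def langForall (A : UCB σ Q) : Set (ℕ → σ) :=
  { w | ∀ ρ : ℕ → Q, A.Run w ρ → { j | A.col1 (ρ j) }.Finite }

/-- A run prefix of `A` on a finite word `p` (only `ρ 0, …, ρ p.length` are relevant). -/
def RunPrefix (A : UCB σ Q) (p : List σ) (ρ : ℕ → Q) : Prop :=
  ρ 0 ∈ A.init ∧ ∀ (j : ℕ) (h : j < p.length), ρ (j + 1) ∈ A.δ (ρ j) (p.get ⟨j, h⟩)

/-- The set of states reachable from a set of states while reading a finite word. -/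
def postSet (A : UCB σ Q) : Set Q → List σ → Set Q
  | S, [] => S
  | S, a :: u => postSet A (⋃ q ∈ S, A.δ q a) u

end UCB

/-- The set `CF(A,k)` of `k`-counting functions, as integer-valued functions. -/
def CFset (Q : Type) (k : ℕ) : Set (Q → ℤ) :=
  { f | ∀ q, -1 ≤ f q ∧ f q ≤ (k : ℤ) + 1 }

/-- The transition function `δ^D` of the determinization `D(A,k)` on counting functions. -/
noncomputable def detTransFun {σ Q : Type} [Fintype Q] (A : UCB σ Q) (k : ℕ)
    (f : Q → ℤ) (a : σ) : Q → ℤ := fun q =>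
  let pred : Finset Q := Finset.univ.filter fun q' => q ∈ A.δ q' a ∧ 0 ≤ f q'
  if h : pred.Nonempty then
    min (pred.sup' h f + (if A.col1 q then 1 else 0)) ((k : ℤ) + 1)
  else -1

/-- The (unique) run of `D(A,k)` on an ω-word `w`, starting from `f`. -/
noncomputable def detRun {σ Q : Type} [Fintype Q] (A : UCB σ Q) (k : ℕ)
    (f : Q → ℤ) (w : ℕ → σ) : ℕ → Q → ℤ
  | 0 => f
  | n + 1 => detTransFun A k (detRun A k f w n) (w n)

/-- The state of `D(A,k)` reached from `f` after reading a finite word. -/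
noncomputable def detPostW {σ Q : Type} [Fintype Q] (A : UCB σ Q) (k : ℕ) :
    (Q → ℤ) → List σ → Q → ℤ
  | f, [] => f
  | f, a :: u => detPostW A k (detTransFun A k f a) u

/-- The initial counting function `f₀` of `D(A,k)`. -/
noncomputable def initCF {σ Q : Type} (A : UCB σ Q) : Q → ℤ := fun q =>
  if q ∈ A.init then (if A.col1 q then 1 else 0) else -1

/-- `L(D(A,k)[f])`: ω-words whose run of `D(A,k)` from `f` never visits an unsafe
counting function (one taking the value `k+1`). -/
def langD {σ Q : Type} [Fintype Q] (A : UCB σ Q) (k : ℕ) (f : Q → ℤ) :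
    Set (ℕ → σ) :=
  { w | ∀ n, ¬ ∃ q, detRun A k f w n q = (k : ℤ) + 1 }

/-- A complete deterministic safety automaton: the set `bad` of unsafe states is a trap. -/
structure DetSafety (σ Q : Type) where
  start : Q
  δ : Q → σ → Q
  bad : Set Q
  trap : ∀ q ∈ bad, ∀ a, δ q a ∈ bad

namespace DetSafety

variable {σ Q : Type}

/-- State reached after reading a finite word. -/
def postW (A : DetSafety σ Q) : Q → List σ → Q
  | q, [] => q
  | q, a :: u => postW A (A.δ q a) u

/-- The run of a deterministic automaton on an ω-word. -/
def runOn (A : DetSafety σ Q) (w : ℕ → σ) : ℕ → Q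
  | 0 => A.start
  | n + 1 => A.δ (runOn A w n) (w n)

/-- The (safety) ω-language: the run never enters an unsafe state. -/
def omegaLang (A : DetSafety σ Q) : Set (ℕ → σ) :=
  { w | ∀ n, runOn A w n ∉ A.bad }

end DetSafety

/-- A complete deterministic automaton (no acceptance condition). -/
structure DetAuto (σ Q : Type) where
  start : Q
  δ : Q → σ → Q

/-- State reached after reading a finite word. -/
def DetAuto.postW {σ Q : Type} (A : DetAuto σ Q) : Q → List σ → Q
  | q, [] => q
  | q, a :: u => DetAuto.postW A (A.δ q a) u

/-- Domination order between collections: every element of `A` is below some element of `B`. -/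
def acLE {α : Type} (r : α → α → Prop) (A B : Set α) : Prop :=
  ∀ x ∈ A, ∃ y ∈ B, r x y

/-- Downward closure of a collection of subsets of `Y`. -/
def dcl {Y : Type} (A : Set (Set Y)) : Set (Set Y) :=
  { X | ∃ X' ∈ A, X ⊆ X' }

/-- The merged relation `U(∼, p)` for a non-congruent point with successors `s, s'`. -/
def Umerge {M : Type} (r : M → M → Prop) (s s' : M) : M → M → Prop :=
  fun y y' => r y y' ∨ (r y s ∧ r y' s') ∨ (r y' s ∧ r y s')

/-- Prefix closure of a set of finite words over `I × O`. -/
def prefsE {I O : Type} (E : Set (List (I × O))) : Set (List (I × O)) :=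
  { u | ∃ e ∈ E, u <+: e }

/-- Consistency of a set of examples: the output is uniquely determined by each
prefix ending with an input. -/
def ConsistentE {I O : Type} (E : Set (List (I × O))) : Prop :=
  ∀ (u : List (I × O)) (i : I) (o o' : O),
    (u ++ [(i, o)]) ∈ prefsE E → (u ++ [(i, o')]) ∈ prefsE E → o = o'

/-- The prefix-tree acceptor `PTA(E)`: states are the prefixes of `E` (together with ε). -/
noncomputable def PTA {I O : Type} (E : Set (List (I × O))) :
    PreMealy I O (↥(insert ([] : List (I × O)) (prefsE E))) where
  init := ⟨[], Set.mem_insert _ _⟩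
  trans := fun u i =>
    if h : ∃ o : O, (u.1 ++ [(i, o)]) ∈ prefsE E then
      some (h.choose, ⟨u.1 ++ [(i, h.choose)], Set.mem_insert_of_mem _ h.choose_spec⟩)
    else none

/-- The fixpoint labelling `F*` of the states of a preMealy machine by counting functions. -/
noncomputable def Fstar {I O M Q : Type} [Fintype Q] (P : PreMealy I O M)
    (A : UCB (I ⊕ O) Q) (k : ℕ) (m : M) : Q → ℤ := fun q =>
  sSup (insert (-1 : ℤ)
    { z | ∃ u ∈ P.leftLang m, detPostW A k (initCF A) (flattenWord u) q = z })

lemma detTrans_max {σ Q : Type} [Fintype Q] (A : UCB σ Q) (k : ℕ)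
    (f₁ f₂ : Q → ℤ) (a : σ) (q : Q) :
    detTransFun A k (fun q => max (f₁ q) (f₂ q)) a q
      = max (detTransFun A k f₁ a q) (detTransFun A k f₂ a q) := by
  simp only [detTransFun]
  set p₁ : Finset Q := Finset.univ.filter fun q' => q ∈ A.δ q' a ∧ 0 ≤ f₁ q' with hp₁
  set p₂ : Finset Q := Finset.univ.filter fun q' => q ∈ A.δ q' a ∧ 0 ≤ f₂ q' with hp₂
  set pm : Finset Q := Finset.univ.filter
    fun q' => q ∈ A.δ q' a ∧ 0 ≤ max (f₁ q') (f₂ q') with hpm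
  have hm₁ : ∀ x, x ∈ p₁ ↔ q ∈ A.δ x a ∧ 0 ≤ f₁ x := by
    intro x; simp [hp₁]
  have hm₂ : ∀ x, x ∈ p₂ ↔ q ∈ A.δ x a ∧ 0 ≤ f₂ x := by
    intro x; simp [hp₂]
  have hmm : ∀ x, x ∈ pm ↔ q ∈ A.δ x a ∧ 0 ≤ max (f₁ x) (f₂ x) := by
    intro x; simp [hpm]
  have hunion : ∀ x, x ∈ pm ↔ x ∈ p₁ ∨ x ∈ p₂ := by
    intro x
    rw [hmm, hm₁, hm₂]
    constructor
    · rintro ⟨hd, hle⟩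
      rcases le_max_iff.mp hle with h | h
      · exact Or.inl ⟨hd, h⟩
      · exact Or.inr ⟨hd, h⟩
    · rintro (⟨hd, h⟩ | ⟨hd, h⟩)
      · exact ⟨hd, le_max_of_le_left h⟩
      · exact ⟨hd, le_max_of_le_right h⟩
  by_cases h1 : p₁.Nonempty <;> by_cases h2 : p₂.Nonempty
  · -- both nonempty
    have hmne : pm.Nonempty := by
      obtain ⟨x, hx⟩ := h1
      exact ⟨x, (hunion x).mpr (Or.inl hx)⟩
    rw [dif_pos h1, dif_pos h2, dif_pos hmne]
    have hsup : pm.sup' hmne (fun q' => max (f₁ q') (f₂ q'))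
        = max (p₁.sup' h1 f₁) (p₂.sup' h2 f₂) := by
      apply le_antisymm
      · apply Finset.sup'_le
        intro x hx
        rcases le_max_iff.mp ((hmm x).mp hx).2 with h | h
        · have hx1 : x ∈ p₁ := (hm₁ x).mpr ⟨((hmm x).mp hx).1, h⟩
          have h1' : f₁ x ≤ p₁.sup' h1 f₁ := Finset.le_sup' _ hx1
          by_cases hx2 : 0 ≤ f₂ x
          · have hx2' : x ∈ p₂ := (hm₂ x).mpr ⟨((hmm x).mp hx).1, hx2⟩
            have h2' : f₂ x ≤ p₂.sup' h2 f₂ := Finset.le_sup' _ hx2'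
            exact max_le (le_max_of_le_left h1') (le_max_of_le_right h2')
          · have : f₂ x ≤ f₁ x := le_trans (le_of_lt (not_le.mp hx2)) h
            exact max_le (le_max_of_le_left h1')
              (le_max_of_le_left (this.trans h1'))
        · have hx2 : x ∈ p₂ := (hm₂ x).mpr ⟨((hmm x).mp hx).1, h⟩
          have h2' : f₂ x ≤ p₂.sup' h2 f₂ := Finset.le_sup' _ hx2
          by_cases hx1 : 0 ≤ f₁ x
          · have hx1' : x ∈ p₁ := (hm₁ x).mpr ⟨((hmm x).mp hx).1, hx1⟩
            have h1' : f₁ x ≤ p₁.sup' h1 f₁ := Finset.le_sup' _ hx1'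
            exact max_le (le_max_of_le_left h1') (le_max_of_le_right h2')
          · have : f₁ x ≤ f₂ x := le_trans (le_of_lt (not_le.mp hx1)) h
            exact max_le (le_max_of_le_right (this.trans h2'))
              (le_max_of_le_right h2')
      · apply max_le
        · apply Finset.sup'_le
          intro x hx
          have : x ∈ pm := (hunion x).mpr (Or.inl hx)
          exact le_trans (le_max_left _ _)
            (Finset.le_sup' (fun q' => max (f₁ q') (f₂ q')) this)
        · apply Finset.sup'_le
          intro x hx
          have : x ∈ pm := (hunion x).mpr (Or.inr hx)
          exact le_trans (le_max_right _ _)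
            (Finset.le_sup' (fun q' => max (f₁ q') (f₂ q')) this)
    rw [hsup]
    omega
  · -- p₁ nonempty, p₂ empty
    have hmne : pm.Nonempty := by
      obtain ⟨x, hx⟩ := h1
      exact ⟨x, (hunion x).mpr (Or.inl hx)⟩
    rw [dif_pos h1, dif_neg h2, dif_pos hmne]
    have heq : pm = p₁ := by
      ext x
      rw [hunion]
      simp only [or_iff_left_iff_imp]
      intro hx; exact absurd ⟨x, hx⟩ h2
    have hsup : pm.sup' hmne (fun q' => max (f₁ q') (f₂ q')) = p₁.sup' h1 f₁ := by
      apply Finset.sup'_congr hmne heq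
      intro x hx
      rw [heq] at hx
      have hx2 : ¬ 0 ≤ f₂ x := fun h => h2 ⟨x, (hm₂ x).mpr ⟨((hm₁ x).mp hx).1, h⟩⟩
      have := ((hm₁ x).mp hx).2
      omega
    rw [hsup]
    have h0 : 0 ≤ p₁.sup' h1 f₁ := by
      obtain ⟨x, hx⟩ := h1
      exact le_trans ((hm₁ x).mp hx).2 (Finset.le_sup' _ hx)
    omega
  · -- p₁ empty, p₂ nonempty
    have hmne : pm.Nonempty := by
      obtain ⟨x, hx⟩ := h2
      exact ⟨x, (hunion x).mpr (Or.inr hx)⟩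
    rw [dif_neg h1, dif_pos h2, dif_pos hmne]
    have heq : pm = p₂ := by
      ext x
      rw [hunion]
      simp only [or_iff_right_iff_imp]
      intro hx; exact absurd ⟨x, hx⟩ h1
    have hsup : pm.sup' hmne (fun q' => max (f₁ q') (f₂ q')) = p₂.sup' h2 f₂ := by
      apply Finset.sup'_congr hmne heq
      intro x hx
      rw [heq] at hx
      have hx1 : ¬ 0 ≤ f₁ x := fun h => h1 ⟨x, (hm₁ x).mpr ⟨((hm₂ x).mp hx).1, h⟩⟩
      have := ((hm₂ x).mp hx).2
      omega
    rw [hsup]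
    have h0 : 0 ≤ p₂.sup' h2 f₂ := by
      obtain ⟨x, hx⟩ := h2
      exact le_trans ((hm₂ x).mp hx).2 (Finset.le_sup' _ hx)
    omega
  · -- both empty
    have hmne : ¬ pm.Nonempty := by
      rintro ⟨x, hx⟩
      rcases (hunion x).mp hx with h | h
      · exact h1 ⟨x, h⟩
      · exact h2 ⟨x, h⟩
    rw [dif_neg h1, dif_neg h2, dif_neg hmne]
    omega

lemma detTrans_le {σ Q : Type} [Fintype Q] (A : UCB σ Q) (k : ℕ)
    (f : Q → ℤ) (a : σ) (q : Q) : detTransFun A k f a q ≤ (k : ℤ) + 1 := by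
  simp only [detTransFun]
  split <;> omega

lemma detRun_le {σ Q : Type} [Fintype Q] (A : UCB σ Q) (k : ℕ)
    (f : Q → ℤ) (hf : f ∈ CFset Q k) (w : ℕ → σ) (i : ℕ) (q : Q) :
    detRun A k f w i q ≤ (k : ℤ) + 1 := by
  cases i with
  | zero => exact (hf q).2
  | succ n => exact detTrans_le A k _ _ _

/-- the run of `D(A,k)` from `f₁ ⊔ f₂` is the pointwise join of the runs
from `f₁` and from `f₂`; consequently it avoids unsafe states iff both runs do. -/
theorem stmt5 {σ Q : Type} [Fintype σ] [Fintype Q] [Nonempty Q]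
    (A : UCB σ Q) (k : ℕ) (f₁ f₂ : Q → ℤ)
    (h₁ : f₁ ∈ CFset Q k) (h₂ : f₂ ∈ CFset Q k) (w : ℕ → σ) :
    (∀ (i : ℕ) (q : Q),
        detRun A k (fun q => max (f₁ q) (f₂ q)) w i q
          = max (detRun A k f₁ w i q) (detRun A k f₂ w i q)) ∧
    ((∀ i : ℕ, ¬ ∃ q, detRun A k (fun q => max (f₁ q) (f₂ q)) w i q = (k : ℤ) + 1) ↔
      ((∀ i : ℕ, ¬ ∃ q, detRun A k f₁ w i q = (k : ℤ) + 1) ∧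
       (∀ i : ℕ, ¬ ∃ q, detRun A k f₂ w i q = (k : ℤ) + 1))) := by
  have main : ∀ (i : ℕ) (q : Q),
      detRun A k (fun q => max (f₁ q) (f₂ q)) w i q
        = max (detRun A k f₁ w i q) (detRun A k f₂ w i q) := by
    intro i
    induction i with
    | zero => intro q; rfl
    | succ n ih =>
      intro q
      show detTransFun A k (detRun A k (fun q => max (f₁ q) (f₂ q)) w n) (w n) q = _
      have : detRun A k (fun q => max (f₁ q) (f₂ q)) w n
          = fun q => max (detRun A k f₁ w n q) (detRun A k f₂ w n q) := funext ih
      rw [this, detTrans_max]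
      rfl
  refine ⟨main, ?_⟩
  constructor
  · intro h
    constructor <;> intro i hex <;> obtain ⟨q, hq⟩ := hex <;>
      refine h i ⟨q, ?_⟩ <;> rw [main i q, hq]
    · have := detRun_le A k f₂ h₂ w i q
      omega
    · have := detRun_le A k f₁ h₁ w i q
      omega
  · rintro ⟨ha, hb⟩ i ⟨q, hq⟩
    rw [main i q] at hq
    rcases max_cases (detRun A k f₁ w i q) (detRun A k f₂ w i q) with ⟨h, _⟩ | ⟨h, _⟩
    · exact ha i ⟨q, by omega⟩
    · exact hb i ⟨q, by omega⟩
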